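/- Let R=(r_n) be a regular sequence and let f_1,…,f_k be operators on R. Then the set {f_1(n_1)+⋯+f_k(n_k) : (n_1,…,n_k) ∈ ℕ^k} ∩ ℕ is not piecewise syndetic. -/

import Mathlib

open Filter Polynomial

noncomputable section Aux

/-- Evaluate an integer polynomial `p` as an "operator" on the sequence `r` at `n`:
`∑ i, (coeff p i) * r (n + i)`. -/
def Ev (r : ℕ → ℕ) (p : Polynomial ℤ) (n : ℕ) : ℤ :=
  p.sum fun i a => a * (r (n + i) : ℤ)

lemma Ev_zero (r : ℕ → ℕ) (n : ℕ) : Ev r 0 n = 0 := by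
  simp [Ev]

lemma Ev_add (r : ℕ → ℕ) (p q : Polynomial ℤ) (n : ℕ) :
    Ev r (p + q) n = Ev r p n + Ev r q n := by
  unfold Ev
  apply Polynomial.sum_add_index <;> intros <;> ring

lemma Ev_monomial (r : ℕ → ℕ) (i : ℕ) (a : ℤ) (n : ℕ) :
    Ev r (Polynomial.monomial i a) n = a * (r (n + i) : ℤ) := by
  unfold Ev
  rw [Polynomial.sum_monomial_index]
  simp

lemma Ev_X_pow_mul (r : ℕ → ℕ) (t : ℕ) (p : Polynomial ℤ) (n : ℕ) :
    Ev r (X ^ t * p) n = Ev r p (n + t) := by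
  induction p using Polynomial.induction_on' with
  | add p q hp hq => rw [mul_add, Ev_add, Ev_add, hp, hq]
  | monomial i a =>
      rw [show (X:Polynomial ℤ)^t * monomial i a = monomial (t+i) a by
        rw [Polynomial.X_pow_eq_monomial, Polynomial.monomial_mul_monomial, one_mul]]
      rw [Ev_monomial, Ev_monomial, ← add_assoc]

lemma Ev_C_mul (r : ℕ → ℕ) (a : ℤ) (p : Polynomial ℤ) (n : ℕ) :
    Ev r (C a * p) n = a * Ev r p n := by
  induction p using Polynomial.induction_on' with
  | add p q hp hq => rw [mul_add, Ev_add, Ev_add, hp, hq, mul_add]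
  | monomial i b =>
      rw [Polynomial.C_mul_monomial, Ev_monomial, Ev_monomial, mul_assoc]

lemma Ev_neg (r : ℕ → ℕ) (p : Polynomial ℤ) (n : ℕ) : Ev r (-p) n = -Ev r p n := by
  rw [show -p = Polynomial.C (-1) * p by simp, Ev_C_mul]; ring

lemma Ev_sub (r : ℕ → ℕ) (p q : Polynomial ℤ) (n : ℕ) :
    Ev r (p - q) n = Ev r p n - Ev r q n := by
  rw [sub_eq_add_neg, Ev_add, Ev_neg]; ring

lemma Ev_eq_sum_range (r : ℕ → ℕ) (p : Polynomial ℤ) (n D : ℕ) (hD : p.natDegree < D) :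
    Ev r p n = ∑ i ∈ Finset.range D, p.coeff i * (r (n + i) : ℤ) := by
  exact Polynomial.sum_over_range' p (by simp) D hD

end Aux
/-- All the values `∑ⱼ Ev r pⱼ nⱼ` over choices `nⱼ ≤ b`, for `pⱼ` in the list `l`. -/
inductive SumsLe (r : ℕ → ℕ) : List (Polynomial ℤ) → ℕ → ℤ → Prop
  | nil (b : ℕ) : SumsLe r [] b 0
  | cons {l : List (Polynomial ℤ)} {b : ℕ} {w : ℤ} (p : Polynomial ℤ) (n : ℕ)
      (hn : n ≤ b) (hw : SumsLe r l b w) : SumsLe r (p :: l) b (Ev r p n + w)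

def Sums (r : ℕ → ℕ) (l : List (Polynomial ℤ)) (v : ℤ) : Prop := ∃ b, SumsLe r l b v

lemma SumsLe.mono {r : ℕ → ℕ} {l b v} (h : SumsLe r l b v) {b' : ℕ} (hb : b ≤ b') :
    SumsLe r l b' v := by
  induction h with
  | nil => exact SumsLe.nil b'
  | cons p n hn hw ih => exact SumsLe.cons p n (hn.trans hb) (ih hb)

lemma SumsLe.perm {r : ℕ → ℕ} {l l' : List (Polynomial ℤ)} (hp : l.Perm l') {b v}
    (h : SumsLe r l b v) : SumsLe r l' b v := by
  induction hp generalizing v with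
  | nil => exact h
  | cons p hl ih =>
      cases h with
      | cons p n hn hw => exact SumsLe.cons p n hn (ih hw)
  | swap p q l =>
      cases h with
      | cons _ n hn hw =>
          cases hw with
          | cons _ m hm hu =>
              rw [add_left_comm]
              exact SumsLe.cons _ m hm (SumsLe.cons _ n hn hu)
  | trans h1 h2 ih1 ih2 => exact ih2 (ih1 h)

lemma Sums.perm {r : ℕ → ℕ} {l l' : List (Polynomial ℤ)} (hp : l.Perm l') {v}
    (h : Sums r l v) : Sums r l' v := by
  obtain ⟨b, hb⟩ := h; exact ⟨b, hb.perm hp⟩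

/-- Attainment: from a bounded sum over a nonempty list, extract the term with the
largest index; the rest is a sum bounded by that index. -/
lemma SumsLe.attain {r : ℕ → ℕ} {l b v} (h : SumsLe r l b v) (hl : l ≠ []) :
    ∃ p ∈ l, ∃ n ≤ b, ∃ w, v = Ev r p n + w ∧ SumsLe r (l.erase p) n w := by
  induction h with
  | nil b => exact absurd rfl hl
  | @cons l b w p n hn hw ih =>
      rcases eq_or_ne l [] with rfl | hl'
      · cases hw
        exact ⟨p, by simp, n, hn, 0, by simp, by simpa using SumsLe.nil n⟩
      · obtain ⟨q, hq, m, hm, u, hu, hsu⟩ := ih hl'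
        rcases le_or_gt m n with hmn | hnm
        · -- head is the max
          refine ⟨p, by simp, n, hn, w, rfl, ?_⟩
          rw [List.erase_cons_head]
          have : SumsLe r (q :: l.erase q) n (Ev r q m + u) :=
            SumsLe.cons q m hmn (hsu.mono hmn)
          rw [hu]
          exact this.perm (List.perm_cons_erase hq).symm
        · -- the max is inside the tail
          refine ⟨q, List.mem_cons_of_mem _ hq, m, hm, Ev r p n + u, by rw [hu]; ring, ?_⟩
          rcases eq_or_ne p q with rfl | hpq
          · rw [List.erase_cons_head]
            have : SumsLe r (p :: l.erase p) m (Ev r p n + u) :=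
              SumsLe.cons p n hnm.le hsu
            exact this.perm (List.perm_cons_erase hq).symm
          · rw [List.erase_cons_tail]
            · exact SumsLe.cons p n hnm.le hsu
            · simpa using hpq
lemma SumsLe.map {r : ℕ → ℕ} (g : Polynomial ℤ → Polynomial ℤ)
    (hg : ∀ p n, Ev r (g p) n = Ev r p n) {l b v} (h : SumsLe r l b v) :
    SumsLe r (l.map g) b v := by
  induction h with
  | nil b => exact SumsLe.nil b
  | cons p n hn hw ih =>
      rw [← hg p n, List.map_cons]
      exact SumsLe.cons (g p) n hn ih

lemma SumsLe.of_map {r : ℕ → ℕ} (g : Polynomial ℤ → Polynomial ℤ)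
    (hg : ∀ p n, Ev r (g p) n = Ev r p n) {l : List (Polynomial ℤ)} {b v}
    (h : SumsLe r (l.map g) b v) : SumsLe r l b v := by
  induction l generalizing v with
  | nil => cases h; exact SumsLe.nil b
  | cons p l ih =>
      rw [List.map_cons] at h
      cases h with
      | cons _ n hn hw =>
          rw [hg p n]
          exact SumsLe.cons p n hn (ih hw)

lemma Sums.map_iff {r : ℕ → ℕ} (g : Polynomial ℤ → Polynomial ℤ)
    (hg : ∀ p n, Ev r (g p) n = Ev r p n) {l : List (Polynomial ℤ)} {v} :
    Sums r (l.map g) v ↔ Sums r l v :=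
  ⟨fun ⟨b, h⟩ => ⟨b, h.of_map g hg⟩, fun ⟨b, h⟩ => ⟨b, h.map g hg⟩⟩

lemma Sums.erase_of_zero {r : ℕ → ℕ} {l : List (Polynomial ℤ)} {p : Polynomial ℤ}
    (hp : p ∈ l) (h0 : ∀ n, Ev r p n = 0) {v} (h : Sums r l v) : Sums r (l.erase p) v := by
  obtain ⟨b, hb⟩ := h
  have := hb.perm (List.perm_cons_erase hp)
  cases this with
  | cons _ n hn hw => exact ⟨b, by simpa [h0 n] using hw⟩

/-- The finitely many values of bounded sums. -/
lemma SumsLe.values_finset (r : ℕ → ℕ) (l : List (Polynomial ℤ)) (b : ℕ) :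
    ∃ F : Finset ℤ, F.card ≤ (b + 1) ^ l.length ∧ ∀ v, SumsLe r l b v → v ∈ F := by
  classical
  induction l with
  | nil => exact ⟨{0}, by simp, fun v h => by cases h; simp⟩
  | cons p l ih =>
      obtain ⟨F, hF, hmem⟩ := ih
      refine ⟨(Finset.range (b + 1)).biUnion (fun n => F.image (fun w => Ev r p n + w)), ?_, ?_⟩
      · calc ((Finset.range (b + 1)).biUnion _).card
            ≤ ∑ n ∈ Finset.range (b + 1), (F.image (fun w => Ev r p n + w)).card :=
              Finset.card_biUnion_le
          _ ≤ ∑ n ∈ Finset.range (b + 1), F.card := by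
              exact Finset.sum_le_sum fun n _ => Finset.card_image_le
          _ = (b + 1) * F.card := by simp [mul_comm]
          _ ≤ (b + 1) * (b + 1) ^ l.length := by
              exact Nat.mul_le_mul_left _ hF
          _ = (b + 1) ^ (p :: l).length := by rw [List.length_cons, pow_succ, mul_comm]
      · intro v h
        cases h with
        | cons _ n hn hw =>
            refine Finset.mem_biUnion.2 ⟨n, Finset.mem_range.2 (by omega), ?_⟩
            exact Finset.mem_image.2 ⟨_, hmem _ hw, rfl⟩

lemma SumsLe.abs_le {r : ℕ → ℕ} {l b w} (h : SumsLe r l b w) (A : ℤ)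
    (hA : ∀ q ∈ l, ∀ n, n ≤ b → |Ev r q n| ≤ A) : |w| ≤ l.length * A := by
  induction h with
  | nil b => simp
  | @cons l b w p n hn hw ih =>
      have h1 : |Ev r p n| ≤ A := hA p (by simp) n hn
      have h2 : |w| ≤ l.length * A := ih fun q hq => hA q (by simp [hq])
      calc |Ev r p n + w| ≤ |Ev r p n| + |w| := abs_add_le _ _
        _ ≤ A + l.length * A := add_le_add h1 h2
        _ = (p :: l).length * A := by simp [List.length_cons]; ring

/-- Sum of coefficient absolute values. -/
def GG (p : Polynomial ℤ) : ℤ := ∑ i ∈ Finset.range (p.natDegree + 1), |p.coeff i|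

lemma GG_nonneg (p : Polynomial ℤ) : 0 ≤ GG p :=
  Finset.sum_nonneg fun i _ => abs_nonneg _

lemma Ev_abs_le {r : ℕ → ℕ} (hr : Monotone r) (p : Polynomial ℤ) (n : ℕ) :
    |Ev r p n| ≤ GG p * r (n + p.natDegree) := by
  rw [Ev_eq_sum_range r p n (p.natDegree + 1) (by omega)]
  calc |∑ i ∈ Finset.range (p.natDegree + 1), p.coeff i * (r (n + i) : ℤ)|
      ≤ ∑ i ∈ Finset.range (p.natDegree + 1), |p.coeff i * (r (n + i) : ℤ)| :=
        Finset.abs_sum_le_sum_abs _ _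
    _ ≤ ∑ i ∈ Finset.range (p.natDegree + 1), |p.coeff i| * (r (n + p.natDegree) : ℤ) := by
        refine Finset.sum_le_sum fun i hi => ?_
        rw [abs_mul]
        refine mul_le_mul_of_nonneg_left ?_ (abs_nonneg _)
        rw [abs_of_nonneg (by positivity)]
        have hi' := Finset.mem_range.1 hi
        exact_mod_cast Nat.cast_le.2 (hr (by omega : n + i ≤ n + p.natDegree))
    _ = GG p * r (n + p.natDegree) := by rw [GG, Finset.sum_mul]

lemma Sums_of_finSum (r : ℕ → ℕ) {k : ℕ} (P : Fin k → Polynomial ℤ) (nn : Fin k → ℕ) :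
    Sums r (List.ofFn P) (∑ j, Ev r (P j) (nn j)) := by
  induction k with
  | zero => exact ⟨0, by simpa using SumsLe.nil 0⟩
  | succ k ih =>
      obtain ⟨b, hb⟩ := ih (fun j => P j.succ) (fun j => nn j.succ)
      refine ⟨max b (nn 0), ?_⟩
      rw [List.ofFn_succ, Fin.sum_univ_succ]
      exact SumsLe.cons (P 0) (nn 0) (le_max_right _ _) (hb.mono (le_max_left _ _))
section Lac

variable {r : ℕ → ℕ} {ρ : ℝ} {Nr : ℕ}

lemma lac_iter (hρ : 1 ≤ ρ) (hlac : ∀ n, Nr ≤ n → ρ * r n ≤ r (n + 1)) :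
    ∀ (e a : ℕ), Nr ≤ a → ρ ^ e * r a ≤ r (a + e) := by
  intro e
  induction e with
  | zero => simp
  | succ e ih =>
      intro a ha
      have h1 : ρ ^ e * r a ≤ r (a + e) := ih a ha
      have h2 : ρ * r (a + e) ≤ r (a + e + 1) := hlac _ (by omega)
      have hρ0 : (0:ℝ) < ρ := lt_of_lt_of_le one_pos hρ
      calc ρ ^ (e + 1) * r a = ρ * (ρ ^ e * r a) := by ring
        _ ≤ ρ * r (a + e) := by
            have hra : (0:ℝ) ≤ (r a : ℝ) := Nat.cast_nonneg _
            nlinarith [pow_pos hρ0 e]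
        _ ≤ r (a + e + 1) := h2
        _ = r (a + (e + 1)) := by ring_nf

lemma lac2 (hmono : Monotone r) (hρ : 1 ≤ ρ) (hlac : ∀ n, Nr ≤ n → ρ * r n ≤ r (n + 1))
    (a b e : ℕ) (h1 : a + e ≤ b) (h2 : Nr + e ≤ b) :
    ρ ^ e * r a ≤ r b := by
  have hρ0 : (0:ℝ) < ρ := lt_of_lt_of_le one_pos hρ
  set m := max a Nr with hm
  have hme : m + e ≤ b := by omega
  calc ρ ^ e * r a ≤ ρ ^ e * r m := by
        have h3 : (r a : ℝ) ≤ r m := by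
          have h4 : r a ≤ r m := hmono (by omega)
          exact_mod_cast h4
        nlinarith [pow_pos hρ0 e]
    _ ≤ r (m + e) := lac_iter hρ hlac e m (le_max_right a Nr)
    _ ≤ r b := by exact_mod_cast hmono hme

lemma pin_card (hmono : Monotone r) (hρ : 1 < ρ) (hlac : ∀ n, Nr ≤ n → ρ * r n ≤ r (n + 1))
    (D Nbig B : ℕ) (hNb : Nr ≤ Nbig) (x y : ℝ) (hx : 0 < x) (hxy : x ≤ y) :
    (((Finset.range B).filter
        (fun n => Nbig ≤ n ∧ x ≤ (r (n + D) : ℝ) ∧ (r (n + D) : ℝ) ≤ y)).card : ℝ)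
      ≤ Real.log (y / x) / Real.log ρ + 1 := by
  classical
  set P := (Finset.range B).filter
      (fun n => Nbig ≤ n ∧ x ≤ (r (n + D) : ℝ) ∧ (r (n + D) : ℝ) ≤ y) with hP
  have hlog0 : 0 ≤ Real.log (y / x) := Real.log_nonneg ((one_le_div hx).2 hxy)
  have hlogρ : 0 < Real.log ρ := Real.log_pos hρ
  rcases P.eq_empty_or_nonempty with he | hne
  · rw [he]
    simp only [Finset.card_empty, Nat.cast_zero]
    positivity
  · set a := P.min' hne with ha
    have haP : a ∈ P := P.min'_mem hne
    obtain ⟨-, haN, hax, -⟩ : a ∈ Finset.range B ∧ Nbig ≤ a ∧ x ≤ (r (a + D):ℝ) ∧ (r (a+D):ℝ) ≤ y := by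
      simpa [hP, and_assoc] using haP
    set J := Nat.floor (Real.log (y / x) / Real.log ρ) with hJ
    have hsub : P ⊆ Finset.Icc a (a + J) := by
      intro b hb
      obtain ⟨-, hbN, hbx, hby⟩ : b ∈ Finset.range B ∧ Nbig ≤ b ∧ x ≤ (r (b + D):ℝ) ∧ (r (b+D):ℝ) ≤ y := by
        simpa [hP, and_assoc] using hb
      have hab : a ≤ b := P.min'_le b hb
      have hkey : ρ ^ (b - a) * r (a + D) ≤ r (b + D) :=
        lac2 hmono hρ.le hlac (a + D) (b + D) (b - a) (by omega) (by omega)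
      have hpow : ρ ^ (b - a) ≤ y / x := by
        rw [le_div_iff₀ hx]
        have hpp : (0:ℝ) < ρ ^ (b - a) := pow_pos (lt_trans one_pos hρ) _
        nlinarith
      have : ((b - a : ℕ) : ℝ) ≤ Real.log (y / x) / Real.log ρ := by
        rw [le_div_iff₀ hlogρ]
        calc ((b - a : ℕ) : ℝ) * Real.log ρ = Real.log (ρ ^ (b - a)) := (Real.log_pow _ _).symm
          _ ≤ Real.log (y / x) :=
            Real.log_le_log (pow_pos (lt_trans one_pos hρ) _) hpow
      have : b - a ≤ J := Nat.le_floor this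
      exact Finset.mem_Icc.2 ⟨hab, by omega⟩
    calc (P.card : ℝ) ≤ ((Finset.Icc a (a + J)).card : ℝ) := by
          exact_mod_cast Finset.card_le_card hsub
      _ = (J + 1 : ℕ) := by rw [Nat.card_Icc]; congr 1; omega
      _ ≤ Real.log (y / x) / Real.log ρ + 1 := by
          push_cast
          have := Nat.floor_le (by positivity : (0:ℝ) ≤ Real.log (y / x) / Real.log ρ)
          linarith

lemma card_shift (M : ℤ) (L : ℕ) (e : ℤ) (P : ℤ → Prop) [DecidablePred P] :
    ((Finset.Icc M (M + L)).filter (fun v => P (v - e))).card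
      ≤ ((Finset.Icc (M - e) (M - e + L)).filter P).card := by
  apply Finset.card_le_card_of_injOn (fun v => v - e)
  · intro v hv
    obtain ⟨h1, h2⟩ := Finset.mem_filter.1 hv
    obtain ⟨h3, h4⟩ := Finset.mem_Icc.1 h1
    exact Finset.mem_filter.2 ⟨Finset.mem_Icc.2 ⟨by dsimp only; omega, by dsimp only; omega⟩, h2⟩
  · intro a _ b _ h
    simpa using h
section Analysis

variable {r : ℕ → ℕ} {θ : ℝ}

lemma rpos (hmono : StrictMono r) : ∀ n : ℕ, 1 ≤ n → (0:ℝ) < r n := by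
  intro n hn
  have : n ≤ r n := hmono.le_apply
  have : 1 ≤ r n := le_trans hn this
  exact_mod_cast this

lemma ratio_pow (hmono : StrictMono r)
    (hrat : Tendsto (fun n => (r (n + 1) : ℝ) / r n) atTop (nhds θ)) (i : ℕ) :
    Tendsto (fun n => (r (n + i) : ℝ) / r n) atTop (nhds (θ ^ i)) := by
  induction i with
  | zero =>
      rw [pow_zero]
      apply Tendsto.congr' _ tendsto_const_nhds
      filter_upwards [eventually_ge_atTop 1] with n hn
      rw [Nat.add_zero, div_self (ne_of_gt (rpos hmono n hn))]
  | succ i ih =>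
      have t1 : Tendsto (fun n => (r (n + i + 1) : ℝ) / r (n + i)) atTop (nhds θ) :=
        hrat.comp (tendsto_add_atTop_nat i)
      have t2 := t1.mul ih
      rw [← pow_succ'] at t2
      apply Tendsto.congr' _ t2
      filter_upwards [eventually_ge_atTop 1] with n hn
      have hne : ((r (n + i) : ℝ)) ≠ 0 := ne_of_gt (rpos hmono _ (by omega))
      rw [div_mul_div_cancel₀ hne]
      norm_num [add_assoc]

lemma Ev_ratio (hmono : StrictMono r)
    (hrat : Tendsto (fun n => (r (n + 1) : ℝ) / r n) atTop (nhds θ)) (p : Polynomial ℤ) :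
    Tendsto (fun n => (Ev r p n : ℝ) / r n) atTop
      (nhds (∑ i ∈ Finset.range (p.natDegree + 1), (p.coeff i : ℝ) * θ ^ i)) := by
  have h := tendsto_finset_sum (f := fun i n => (p.coeff i : ℝ) * ((r (n + i) : ℝ) / r n))
    (Finset.range (p.natDegree + 1))
    (fun i _ => (tendsto_const_nhds).mul (ratio_pow hmono hrat i))
  apply Tendsto.congr' _ h
  filter_upwards [eventually_ge_atTop 1] with n hn
  rw [Ev_eq_sum_range r p n (p.natDegree + 1) (by omega)]
  push_cast
  rw [Finset.sum_div]
  exact Finset.sum_congr rfl fun i _ => by ring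

/-- Lower (and upper) asymptotic bound for an operator in the `θ` case, given that its
"evaluation at θ" is nonzero. -/
lemma theta_lower (hmono : StrictMono r) (hθ : 1 < θ)
    (hrat : Tendsto (fun n => (r (n + 1) : ℝ) / r n) atTop (nhds θ)) (p : Polynomial ℤ)
    (he : (∑ i ∈ Finset.range (p.natDegree + 1), (p.coeff i : ℝ) * θ ^ i) ≠ 0) :
    ∃ β : ℝ, 0 < β ∧ ∃ N : ℕ, ∀ n, N ≤ n → β * (r (n + p.natDegree) : ℝ) ≤ |(Ev r p n : ℝ)| := by
  set e := ∑ i ∈ Finset.range (p.natDegree + 1), (p.coeff i : ℝ) * θ ^ i with hedef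
  set D := p.natDegree with hD
  have habs : Tendsto (fun n => |(Ev r p n : ℝ)| / r n) atTop (nhds |e|) := by
    have := (Ev_ratio hmono hrat p).abs
    apply Tendsto.congr' _ this
    filter_upwards [eventually_ge_atTop 1] with n hn
    rw [abs_div, abs_of_pos (rpos hmono n hn)]
  have h1 : ∀ᶠ n in atTop, |e| / 2 < |(Ev r p n : ℝ)| / r n :=
    Filter.Tendsto.eventually_const_lt (half_lt_self (abs_pos.2 he)) habs
  have h2 : ∀ᶠ n in atTop, (r (n + D) : ℝ) / r n < θ ^ D + 1 :=
    Filter.Tendsto.eventually_lt_const (by linarith) (ratio_pow hmono hrat D)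
  have hθD : (0:ℝ) < θ ^ D + 1 := by positivity
  refine ⟨|e| / (2 * (θ ^ D + 1)), by
    have : 0 < |e| := abs_pos.2 he
    positivity, ?_⟩
  obtain ⟨N1, hN1⟩ := eventually_atTop.1 h1
  obtain ⟨N2, hN2⟩ := eventually_atTop.1 h2
  refine ⟨max 1 (max N1 N2), fun n hn => ?_⟩
  have hn1 : 1 ≤ n := le_trans (le_max_left _ _) hn
  have hrn : (0:ℝ) < r n := rpos hmono n hn1
  have e1 : |e| / 2 * r n ≤ |(Ev r p n : ℝ)| := by
    have := hN1 n (le_trans (le_trans (le_max_left _ _) (le_max_right _ _)) hn)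
    rw [lt_div_iff₀ hrn] at this
    linarith
  have e2 : (r (n + D) : ℝ) ≤ (θ ^ D + 1) * r n := by
    have := hN2 n (le_trans (le_trans (le_max_right _ _) (le_max_right _ _)) hn)
    rw [div_lt_iff₀ hrn] at this
    linarith
  calc |e| / (2 * (θ ^ D + 1)) * r (n + D)
      ≤ |e| / (2 * (θ ^ D + 1)) * ((θ ^ D + 1) * r n) := by
        have : (0:ℝ) ≤ |e| / (2 * (θ ^ D + 1)) := by positivity
        nlinarith
    _ = |e| / 2 * r n := by field_simp
    _ ≤ |(Ev r p n : ℝ)| := e1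

/-- Lower bound in the `∞` case. -/
lemma infty_lower (hmono : StrictMono r)
    (hrat : Tendsto (fun n => (r (n + 1) : ℝ) / r n) atTop atTop) (p : Polynomial ℤ)
    (hp : p ≠ 0) :
    ∃ β : ℝ, 0 < β ∧ ∃ N : ℕ, ∀ n, N ≤ n → β * (r (n + p.natDegree) : ℝ) ≤ |(Ev r p n : ℝ)| := by
  set D := p.natDegree with hD
  have hlead : (p.coeff D : ℝ) ≠ 0 := by
    exact_mod_cast fun h => hp (Polynomial.leadingCoeff_eq_zero.1 (by exact_mod_cast h))
  -- ratios r (n+i) / r (n+D) → 0 for i < D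
  have hzero : ∀ i < D, Tendsto (fun n => (r (n + i) : ℝ) / r (n + D)) atTop (nhds 0) := by
    intro i hi
    have hup : Tendsto (fun n => (r (n + D) : ℝ) / r (n + D - 1)) atTop atTop := by
      have := hrat.comp (tendsto_add_atTop_nat (D - 1))
      apply this.congr'
      filter_upwards with n
      simp only [Function.comp_apply]
      have h1 : n + (D - 1) + 1 = n + D := by omega
      have h2 : n + (D - 1) = n + D - 1 := by omega
      rw [h1, h2]
    have hinv := hup.inv_tendsto_atTop
    apply tendsto_of_tendsto_of_tendsto_of_le_of_le' tendsto_const_nhds hinv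
    · filter_upwards [eventually_ge_atTop 1] with n hn
      positivity
    · filter_upwards [eventually_ge_atTop 1] with n hn
      have hpos1 : (0:ℝ) < r (n + D) := rpos hmono _ (by omega)
      have hpos2 : (0:ℝ) < r (n + D - 1) := rpos hmono _ (by omega)
      have hle : (r (n + i) : ℝ) ≤ r (n + D - 1) := by
        exact_mod_cast hmono.monotone (by omega : n + i ≤ n + D - 1)
      rw [Pi.inv_apply, inv_div]
      gcongr
  have hEv : Tendsto (fun n => (Ev r p n : ℝ) / r (n + D)) atTop (nhds (p.coeff D : ℝ)) := by
    have hsum := tendsto_finset_sum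
      (f := fun i n => (p.coeff i : ℝ) * ((r (n + i) : ℝ) / r (n + D)))
      (x := atTop) (a := fun i => if i = D then (p.coeff i : ℝ) else 0)
      (Finset.range (D + 1)) (fun i hi => ?_)
    · have : (∑ i ∈ Finset.range (D + 1),
          (fun i => if i = D then (p.coeff i : ℝ) else 0) i) = (p.coeff D : ℝ) := by
        rw [Finset.sum_ite_eq' (Finset.range (D+1)) D]
        simp
      rw [← this]
      apply Tendsto.congr' _ hsum
      filter_upwards [eventually_ge_atTop 1] with n hn
      rw [Ev_eq_sum_range r p n (D + 1) (by omega)]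
      push_cast
      rw [Finset.sum_div]
      exact Finset.sum_congr rfl fun i _ => by ring
    · rcases eq_or_ne i D with rfl | hne
      · simp only [if_pos rfl]
        have h5 : Tendsto (fun n => (r (n + D) : ℝ) / r (n + D)) atTop (nhds 1) := by
          apply Tendsto.congr' _ tendsto_const_nhds
          filter_upwards [eventually_ge_atTop 1] with n hn
          rw [div_self (ne_of_gt (rpos hmono _ (by omega)))]
        simpa using tendsto_const_nhds.mul h5
      · have hiD : i < D := by
          have := Finset.mem_range.1 hi; omega
        simp only [if_neg hne]
        simpa using tendsto_const_nhds.mul (hzero i hiD)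
  have h1 : ∀ᶠ n in atTop, |(p.coeff D : ℝ)| / 2 < |(Ev r p n : ℝ)| / r (n + D) := by
    have habs : Tendsto (fun n => |(Ev r p n : ℝ)| / r (n + D)) atTop (nhds |(p.coeff D : ℝ)|) := by
      have := hEv.abs
      apply Tendsto.congr' _ this
      filter_upwards [eventually_ge_atTop 1] with n hn
      rw [abs_div, abs_of_pos (rpos hmono _ (by omega))]
    exact Filter.Tendsto.eventually_const_lt (by
      have : 0 < |(p.coeff D : ℝ)| := abs_pos.2 hlead
      linarith) habs
  obtain ⟨N1, hN1⟩ := eventually_atTop.1 h1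
  refine ⟨|(p.coeff D : ℝ)| / 2, by
    have : 0 < |(p.coeff D : ℝ)| := abs_pos.2 hlead
    positivity, max 1 N1, fun n hn => ?_⟩
  have hrn : (0:ℝ) < r (n + D) := rpos hmono _ (by omega)
  have := hN1 n (le_trans (le_max_right _ _) hn)
  rw [lt_div_iff₀ hrn] at this
  linarith

/-- Extraction of eventual lacunarity of `r`. -/
lemma lac_of_theta (hmono : StrictMono r) (hθ : 1 < θ)
    (hrat : Tendsto (fun n => (r (n + 1) : ℝ) / r n) atTop (nhds θ)) :
    ∃ Nr : ℕ, ∀ n, Nr ≤ n → ((1 + θ) / 2) * r n ≤ r (n + 1) := by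
  have h : ∀ᶠ n in atTop, (1 + θ) / 2 < (r (n + 1) : ℝ) / r n :=
    Filter.Tendsto.eventually_const_lt (by linarith) hrat
  obtain ⟨N, hN⟩ := eventually_atTop.1 h
  refine ⟨max 1 N, fun n hn => ?_⟩
  have hrn : (0:ℝ) < r n := rpos hmono n (le_trans (le_max_left _ _) hn)
  have := hN n (le_trans (le_max_right _ _) hn)
  rw [lt_div_iff₀ hrn] at this
  linarith

lemma lac_of_infty (hmono : StrictMono r)
    (hrat : Tendsto (fun n => (r (n + 1) : ℝ) / r n) atTop atTop) :
    ∃ Nr : ℕ, ∀ n, Nr ≤ n → (2:ℝ) * r n ≤ r (n + 1) := by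
  have h : ∀ᶠ n in atTop, (2:ℝ) ≤ (r (n + 1) : ℝ) / r n := hrat.eventually (eventually_ge_atTop 2)
  obtain ⟨N, hN⟩ := eventually_atTop.1 h
  refine ⟨max 1 N, fun n hn => ?_⟩
  have hrn : (0:ℝ) < r n := rpos hmono n (le_trans (le_max_left _ _) hn)
  have := hN n (le_trans (le_max_right _ _) hn)
  rw [le_div_iff₀ hrn] at this
  linarith

end Analysis


open Filter

/-- `r` satisfies a linear recurrence relation over `ℤ` whose characteristic
polynomial `X^k - ∑_{i<k} cᵢ X^i` is the minimal polynomial of `θ` over `ℚ`. -/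
def SatisfiesRecurrenceMinpoly (r : ℕ → ℕ) (θ : ℝ) : Prop :=
  ∃ k : ℕ, 0 < k ∧ ∃ c : ℕ → ℤ,
    (∀ n : ℕ, (r (n + k) : ℤ) = ∑ i ∈ Finset.range k, c i * r (n + i)) ∧
    (Polynomial.X ^ k - ∑ i ∈ Finset.range k, Polynomial.C (c i : ℚ) * Polynomial.X ^ i)
      = minpoly ℚ θ

/-- A strictly increasing sequence `r` of naturals is regular if the ratios
`r (n+1) / r n` tend to `∞` or converge to some real `θ > 1` which, if
algebraic, is such that `r` satisfies a linear recurrence whose characteristic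
polynomial is the minimal polynomial of `θ`. -/
def IsRegularSequence (r : ℕ → ℕ) : Prop :=
  StrictMono r ∧
    (Tendsto (fun n => (r (n + 1) : ℝ) / r n) atTop atTop ∨
      ∃ θ : ℝ, 1 < θ ∧ Tendsto (fun n => (r (n + 1) : ℝ) / r n) atTop (nhds θ) ∧
        (IsAlgebraic ℚ θ → SatisfiesRecurrenceMinpoly r θ))

/-- `A ⊆ ℕ` is piecewise syndetic: for some gap bound `d`, there are arbitrarily
long increasing sequences of elements of `A` with consecutive gaps at most `d`. -/
def PiecewiseSyndetic (A : Set ℕ) : Prop :=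
  ∃ d : ℕ, ∀ k : ℕ, ∃ a : ℕ → ℕ,
    (∀ i < k, a i ∈ A) ∧
    (∀ i, i + 1 < k → a i < a (i + 1) ∧ a (i + 1) - a i ≤ d)

section Reduction

variable {r : ℕ → ℕ}

lemma Ev_finsetSum (r : ℕ → ℕ) {α : Type*} (s : Finset α) (g : α → Polynomial ℤ) (n : ℕ) :
    Ev r (∑ i ∈ s, g i) n = ∑ i ∈ s, Ev r (g i) n := by
  classical
  induction s using Finset.cons_induction with
  | empty => simp [Ev_zero]
  | cons a s ha ih => rw [Finset.sum_cons, Finset.sum_cons, Ev_add, ih]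

lemma Ev_mul_eq_zero (pt : Polynomial ℤ) (hpt : ∀ m, Ev r pt m = 0) (q : Polynomial ℤ) (n : ℕ) :
    Ev r (q * pt) n = 0 := by
  induction q using Polynomial.induction_on' with
  | add a b ha hb => rw [add_mul, Ev_add, ha, hb, add_zero]
  | monomial t a =>
      rw [show (Polynomial.monomial t a) * pt = Polynomial.C a * (Polynomial.X ^ t * pt) by
        rw [← mul_assoc, Polynomial.C_mul_X_pow_eq_monomial]]
      rw [Ev_C_mul, Ev_X_pow_mul, hpt, mul_zero]

lemma Ev_mod (pt : Polynomial ℤ) (hmonic : pt.Monic) (hpt : ∀ m, Ev r pt m = 0)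
    (p : Polynomial ℤ) (n : ℕ) : Ev r (p %ₘ pt) n = Ev r p n := by
  conv_rhs => rw [← Polynomial.modByMonic_add_div p pt]
  rw [Ev_add, mul_comm, Ev_mul_eq_zero pt hpt, add_zero]

/-- Evaluation of an integer polynomial at a real number, as a sum over coefficients. -/
lemma aeval_eq_sum (p : Polynomial ℤ) (θ : ℝ) :
    (Polynomial.aeval θ p : ℝ) = ∑ i ∈ Finset.range (p.natDegree + 1), (p.coeff i : ℝ) * θ ^ i := by
  rw [Polynomial.aeval_def, ← Polynomial.eval_map, Polynomial.eval_eq_sum_range]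
  rw [Polynomial.natDegree_map_eq_of_injective]
  · exact Finset.sum_congr rfl fun i _ => by rw [Polynomial.coeff_map]; simp
  · intro a b hab
    have : (a : ℝ) = b := by simpa using hab
    exact_mod_cast this

/-- The master dichotomy: for a regular sequence, there is a lacunarity constant and a
reduction map on operators such that every nonzero reduced operator grows like `r`. -/
lemma master (r : ℕ → ℕ) (hr : IsRegularSequence r) :
    ∃ (ρ : ℝ) (Nr : ℕ) (red : Polynomial ℤ → Polynomial ℤ),
      1 < ρ ∧ (∀ n, Nr ≤ n → ρ * r n ≤ r (n + 1)) ∧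
      (∀ p n, Ev r (red p) n = Ev r p n) ∧
      (∀ p, red p ≠ 0 → ∃ β : ℝ, 0 < β ∧ ∃ N, ∀ n, N ≤ n →
        β * (r (n + (red p).natDegree) : ℝ) ≤ |(Ev r (red p) n : ℝ)|) := by
  obtain ⟨hmono, hcase⟩ := hr
  rcases hcase with hinf | ⟨θ, hθ, hrat, halgrec⟩
  · obtain ⟨Nr, hlac⟩ := lac_of_infty hmono hinf
    exact ⟨2, Nr, id, one_lt_two, hlac, fun p n => rfl,
      fun p hp => infty_lower hmono hinf p hp⟩
  · obtain ⟨Nr, hlac⟩ := lac_of_theta hmono hθ hrat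
    have hρ : 1 < (1 + θ) / 2 := by linarith
    by_cases halg : IsAlgebraic ℚ θ
    · -- algebraic case: reduce mod the integer characteristic polynomial
      obtain ⟨K, hK, c, hrec, hpoly⟩ := halgrec halg
      set pt : Polynomial ℤ :=
        Polynomial.X ^ K - ∑ i ∈ Finset.range K, Polynomial.C (c i) * Polynomial.X ^ i with hpt
      have hdegsum : (∑ i ∈ Finset.range K, Polynomial.C (c i) * Polynomial.X ^ i).degree
          < (K : WithBot ℕ) := by
        refine lt_of_le_of_lt (Polynomial.degree_sum_le _ _) ?_
        rw [Finset.sup_lt_iff (by exact_mod_cast WithBot.bot_lt_coe K)]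
        intro i hi
        refine lt_of_le_of_lt (Polynomial.degree_C_mul_X_pow_le _ _) ?_
        exact_mod_cast Finset.mem_range.1 hi
      have hmonic : pt.Monic := Polynomial.monic_X_pow_sub hdegsum
      have hdegpt : pt.degree = (K : WithBot ℕ) := by
        rw [hpt, Polynomial.degree_sub_eq_left_of_degree_lt
          (by rwa [Polynomial.degree_X_pow]), Polynomial.degree_X_pow]
      have hmap : pt.map (algebraMap ℤ ℚ) = minpoly ℚ θ := by
        rw [← hpoly, hpt]
        push_cast [Polynomial.map_sub, Polynomial.map_pow, Polynomial.map_X,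
          Polynomial.map_sum, Polynomial.map_mul, Polynomial.map_C]
        norm_num
      have hEvpt : ∀ m, Ev r pt m = 0 := by
        intro m
        have h1 : Ev r (Polynomial.X ^ K : Polynomial ℤ) m = (r (m + K) : ℤ) := by
          rw [Polynomial.X_pow_eq_monomial, Ev_monomial, one_mul]
        have h2 : Ev r (∑ i ∈ Finset.range K, Polynomial.C (c i) * Polynomial.X ^ i) m
            = ∑ i ∈ Finset.range K, c i * (r (m + i) : ℤ) := by
          rw [Ev_finsetSum]
          refine Finset.sum_congr rfl fun i _ => ?_
          rw [Ev_C_mul, Polynomial.X_pow_eq_monomial, Ev_monomial, one_mul]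
        rw [hpt, Ev_sub, h1, h2, hrec m, sub_self]
      refine ⟨(1 + θ) / 2, Nr, (· %ₘ pt), hρ, hlac,
        fun p n => Ev_mod pt hmonic hEvpt p n, fun p hp => ?_⟩
      apply theta_lower hmono hθ hrat
      intro he
      set q := p %ₘ pt with hq
      have hqQ : q.map (algebraMap ℤ ℚ) ≠ 0 := by
        intro h
        exact hp (Polynomial.map_injective (algebraMap ℤ ℚ) (fun a b hab => by
          have : (a : ℚ) = b := by simpa using hab
          exact_mod_cast this)
          (by simpa using h))
      have haev : Polynomial.aeval θ (q.map (algebraMap ℤ ℚ)) = 0 := by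
        rw [Polynomial.aeval_map_algebraMap]
        rw [show (Polynomial.aeval θ q : ℝ) = 0 from by rw [aeval_eq_sum]; exact he]
      have hmindeg := minpoly.degree_le_of_ne_zero ℚ θ hqQ haev
      have hdegq : (q.map (algebraMap ℤ ℚ)).degree < (minpoly ℚ θ).degree := by
        rw [Polynomial.degree_map_eq_of_injective (fun a b hab => by
          have : (a : ℚ) = b := by simpa using hab
          exact_mod_cast this),
          ← hmap, Polynomial.degree_map_eq_of_injective (fun a b hab => by
          have : (a : ℚ) = b := by simpa using hab
          exact_mod_cast this)]
        exact Polynomial.degree_modByMonic_lt p hmonic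
      exact absurd hmindeg (not_le.2 hdegq)
    · -- transcendental case
      refine ⟨(1 + θ) / 2, Nr, id, hρ, hlac, fun p n => rfl, fun p hp => ?_⟩
      apply theta_lower hmono hθ hrat
      intro he
      apply halg
      refine ⟨p.map (algebraMap ℤ ℚ), ?_, ?_⟩
      · intro h
        exact hp (Polynomial.map_injective (algebraMap ℤ ℚ) (fun a b hab => by
          have : (a : ℚ) = b := by simpa using hab
          exact_mod_cast this)
          (by simpa using h))
      · rw [Polynomial.aeval_map_algebraMap]
        rw [show (Polynomial.aeval θ p : ℝ) = 0 from by rw [aeval_eq_sum]; exact he]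

end Reduction
section Count

open scoped Classical

variable {r : ℕ → ℕ} {ρ : ℝ} {Nr : ℕ} {red : Polynomial ℤ → Polynomial ℤ}

set_option maxHeartbeats 2000000 in
/-- The central counting lemma: any window of length `L` contains at most
`C (log L + 2)^k` values representable as sums of `k` operators. -/
lemma count_lemma (hmono : StrictMono r) (hρ : 1 < ρ)
    (hlac : ∀ n, Nr ≤ n → ρ * r n ≤ r (n + 1))
    (hredEv : ∀ p n, Ev r (red p) n = Ev r p n)
    (hdich : ∀ p, red p ≠ 0 → ∃ β : ℝ, 0 < β ∧ ∃ N, ∀ n, N ≤ n →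
      β * (r (n + (red p).natDegree) : ℝ) ≤ |(Ev r (red p) n : ℝ)|) :
    ∀ (len : ℕ) (l : List (Polynomial ℤ)), l.length ≤ len →
    ∃ C : ℝ, 0 < C ∧ ∀ (M : ℤ) (L : ℕ), 2 ≤ L →
      (((Finset.Icc M (M + L)).filter (fun v => Sums r l v)).card : ℝ)
        ≤ C * (Real.log L + 2) ^ l.length := by
  intro len
  induction len with
  | zero =>
      intro l hl
      rw [List.length_eq_zero_iff.1 (Nat.le_zero.1 hl)]
      refine ⟨1, one_pos, fun M L hL => ?_⟩
      have hsub : (Finset.Icc M (M + L)).filter (fun v => Sums r ([] : List (Polynomial ℤ)) v)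
          ⊆ {0} := by
        intro v hv
        obtain ⟨-, b, hb⟩ := Finset.mem_filter.1 hv
        cases hb
        simp
      calc ((Finset.filter _ _).card : ℝ) ≤ ({0} : Finset ℤ).card := by
            exact_mod_cast Finset.card_le_card hsub
        _ = 1 := by simp
        _ ≤ 1 * (Real.log L + 2) ^ (0:ℕ) := by norm_num
  | succ len IH =>
      intro l hlen1
      by_cases hlen : l.length ≤ len
      · exact IH l hlen
      have hllen : l.length = len + 1 := by omega
      -- replace l by its reduction
      set l' := l.map red with hl'
      have hl'len : l'.length = len + 1 := by rw [hl', List.length_map]; exact hllen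
      have hfilter_eq : ∀ M L, (Finset.Icc (M:ℤ) (M + (L:ℕ))).filter (fun v => Sums r l v)
          = (Finset.Icc M (M + L)).filter (fun v => Sums r l' v) := by
        intro M L
        apply Finset.filter_congr
        intro v _
        exact ⟨fun h => by rw [hl']; exact (Sums.map_iff red hredEv).2 h,
          fun h => (Sums.map_iff red hredEv).1 (hl' ▸ h)⟩
      have hBge1 : ∀ L : ℕ, 2 ≤ L → (1:ℝ) ≤ Real.log L + 2 := by
        intro L hL
        have : (0:ℝ) ≤ Real.log L := Real.log_nonneg (by exact_mod_cast Nat.one_le_of_lt hL)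
        linarith
      by_cases hzero : (0 : Polynomial ℤ) ∈ l'
      · -- a zero operator can be dropped
        obtain ⟨C, hC0, hC⟩ := IH (l'.erase 0) (by
          rw [List.length_erase_of_mem hzero, hl'len]
          omega)
        refine ⟨C, hC0, fun M L hL => ?_⟩
        rw [hfilter_eq]
        have hsub : (Finset.Icc M (M + L)).filter (fun v => Sums r l' v)
            ⊆ (Finset.Icc M (M + L)).filter (fun v => Sums r (l'.erase 0) v) := by
          intro v hv
          obtain ⟨hv1, hv2⟩ := Finset.mem_filter.1 hv
          exact Finset.mem_filter.2 ⟨hv1, hv2.erase_of_zero hzero (fun n => Ev_zero r n)⟩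
        calc ((Finset.filter _ _).card : ℝ)
            ≤ ((Finset.Icc M (M + L)).filter (fun v => Sums r (l'.erase 0) v)).card := by
              exact_mod_cast Finset.card_le_card hsub
          _ ≤ C * (Real.log L + 2) ^ (l'.erase 0).length := hC M L hL
          _ ≤ C * (Real.log L + 2) ^ l.length := by
              apply mul_le_mul_of_nonneg_left _ hC0.le
              apply pow_le_pow_right₀ (hBge1 L hL)
              rw [List.length_erase_of_mem hzero, hl'len, hllen]
              omega
      · -- main case : all reduced operators nonzero
        -- MAIN CASE
        have hNZ : ∀ q ∈ l', q ≠ 0 := fun q hq h0 => hzero (h0 ▸ hq)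
        have hne : l' ≠ [] := by
          intro h; rw [h] at hl'len; simp at hl'len
        have hS : l'.toFinset.Nonempty := by
          rcases List.exists_mem_of_ne_nil l' hne with ⟨q, hq⟩
          exact ⟨q, List.mem_toFinset.2 hq⟩
        set S := l'.toFinset with hSdef
        have hq' : ∀ q : Polynomial ℤ, ∃ β : ℝ, ∃ N : ℕ, 0 < β ∧ (q ∈ l' → ∀ n, N ≤ n →
            β * (r (n + q.natDegree) : ℝ) ≤ |(Ev r q n : ℝ)|) := by
          intro q
          by_cases hq : q ∈ l'
          · obtain ⟨p, hp, rfl⟩ := List.mem_map.1 (hl' ▸ hq)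
            obtain ⟨β, hβ, N, hN⟩ := hdich p (hNZ _ hq)
            exact ⟨β, N, hβ, fun _ => hN⟩
          · exact ⟨1, 0, one_pos, fun h => absurd h hq⟩
        choose βf Nf hβf hbf using hq'
        set βm := S.inf' hS βf with hβmdef
        have hβm0 : 0 < βm := by
          rw [hβmdef, Finset.lt_inf'_iff]
          exact fun q _ => hβf q
        have hβmle : ∀ q ∈ S, βm ≤ βf q := fun q hq => Finset.inf'_le _ hq
        set Nm := S.sup Nf with hNmdef
        set Dm := S.sup Polynomial.natDegree with hDmdef
        set Γm : ℤ := ∑ q ∈ S, GG q with hΓmdef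
        have hΓm0 : (0:ℤ) ≤ Γm := Finset.sum_nonneg fun q _ => GG_nonneg q
        have hGGle : ∀ q ∈ S, GG q ≤ Γm := fun q hq =>
          Finset.single_le_sum (fun p _ => GG_nonneg p) hq
        set Γ1 : ℝ := (Γm : ℝ) + 1 with hΓ1def
        have hΓ10 : 0 < Γ1 := by
          have h9 : (0:ℝ) ≤ (Γm:ℝ) := by exact_mod_cast hΓm0
          rw [hΓ1def]; linarith only [h9]
        set kk : ℕ := len + 2 with hkkdef
        obtain ⟨T2, hT2⟩ := ((tendsto_pow_atTop_atTop_of_one_lt hρ).eventually_ge_atTop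
          (max (2 * kk * Γ1 / βm) kk)).exists
        have hρT2 : (0:ℝ) < ρ ^ T2 := pow_pos (lt_trans one_pos hρ) _
        set T := Dm + T2 + 1 with hTdef
        set Nbig := Nm + Nr + T + 1 with hNbigdef
        -- uniform IH constants
        have IH' : ∀ l'' : List (Polynomial ℤ), ∃ C : ℝ, 0 < C ∧ (l''.length ≤ len →
            ∀ (M : ℤ) (L : ℕ), 2 ≤ L →
              (((Finset.Icc M (M + L)).filter (fun v => Sums r l'' v)).card : ℝ)
                ≤ C * (Real.log L + 2) ^ l''.length) := by
          intro l''
          by_cases h : l''.length ≤ len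
          · obtain ⟨C, h0, hC⟩ := IH l'' h
            exact ⟨C, h0, fun _ => hC⟩
          · exact ⟨1, one_pos, fun h' => absurd h' h⟩
        choose CF hCF0 hCF using IH'
        -- merged lists
        set ml : Polynomial ℤ → Polynomial ℤ → ℕ → List (Polynomial ℤ) :=
          fun q1 q2 t => (Polynomial.X ^ t * q1 + q2) :: ((l'.erase q1).erase q2) with hmldef
        have herlen : ∀ q1 ∈ l', (l'.erase q1).length = len := by
          intro q1 hq1
          rw [List.length_erase_of_mem hq1, hl'len]
          omega
        have hmllen : ∀ q1 ∈ l', ∀ q2 ∈ l'.erase q1, ∀ t : ℕ, (ml q1 q2 t).length ≤ len := by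
          intro q1 hq1 q2 hq2 t
          have h2 := List.length_erase_of_mem hq2
          have hpos : 0 < (l'.erase q1).length := List.length_pos_iff.2 (List.ne_nil_of_mem hq2)
          rw [herlen q1 hq1] at hpos
          simp only [hmldef, List.length_cons]
          rw [h2, herlen q1 hq1]
          omega
        -- global constants
        set CA : ℝ := ∑ q1 ∈ S, ∑ q2 ∈ (l'.erase q1).toFinset,
            ∑ t ∈ Finset.range (T + 1), CF (ml q1 q2 t) with hCAdef
        have hCA0 : 0 ≤ CA := by
          refine Finset.sum_nonneg fun q1 _ => Finset.sum_nonneg fun q2 _ =>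
            Finset.sum_nonneg fun t _ => (hCF0 _).le
        set CB : ℝ := ∑ q1 ∈ S, CF (l'.erase q1) with hCBdef
        have hCB0 : 0 ≤ CB := Finset.sum_nonneg fun q1 _ => (hCF0 _).le
        set C0r : ℝ := (((Nbig + 1) ^ (len + 1) : ℕ) : ℝ) with hC0rdef
        have hC0r : 0 < C0r := by rw [hC0rdef]; positivity
        set K0 : ℝ := 4 * Γ1 / βm + 2 / βm + 1 with hK0def
        have hK01 : 1 ≤ K0 := by
          have h1 : 0 ≤ 4 * Γ1 / βm := div_nonneg (by linarith only [hΓ10]) hβm0.le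
          have h2 : 0 ≤ 2 / βm := div_nonneg (by norm_num) hβm0.le
          rw [hK0def]; linarith only [h1, h2]
        set mK0 : ℝ := max 0 (Real.log K0) with hmK0def
        have hmK00 : 0 ≤ mK0 := le_max_left _ _
        have hlogρ : 0 < Real.log ρ := Real.log_pos hρ
        set Cpin : ℝ := (mK0 + 2) / Real.log ρ + 1 with hCpindef
        have hCpin0 : 0 < Cpin := by
          have h1 : 0 ≤ (mK0 + 2) / Real.log ρ := div_nonneg (by linarith only [hmK00]) hlogρ.le
          rw [hCpindef]; linarith only [h1]
        have hCBCpin : 0 ≤ CB * Cpin := mul_nonneg hCB0 hCpin0.le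
        refine ⟨C0r + CA + CB * Cpin + 1,
          by linarith only [hC0r, hCA0, hCBCpin], fun M L hL => ?_⟩
        rw [hfilter_eq]
        set B : ℝ := Real.log L + 2 with hBdef
        have hB1 : 1 ≤ B := hBge1 L hL
        have hB0 : 0 < B := lt_of_lt_of_le one_pos hB1
        -- window quantities
        set V : ℝ := max |(M : ℝ)| |(M : ℝ) + L| with hVdef
        set mv : ℝ := max 0 (max (M : ℝ) (-((M : ℝ) + L))) with hmvdef
        have hmv0 : 0 ≤ mv := le_max_left _ _
        have hV0 : 0 ≤ V := le_trans (abs_nonneg _) (le_max_left _ _)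
        have hVmv : V ≤ mv + L := by
          have h1 : (M:ℝ) ≤ mv := le_trans (le_max_left _ _) (le_max_right _ _)
          have h2 : -((M:ℝ) + L) ≤ mv := le_trans (le_max_right _ _) (le_max_right _ _)
          have hL0 : (0:ℝ) ≤ L := Nat.cast_nonneg _
          rw [hVdef]
          apply max_le
          · rw [abs_le]; constructor <;> linarith only [h1, h2, hL0]
          · rw [abs_le]; constructor <;> linarith only [h1, h2, hL0]
        have hvbounds : ∀ v : ℤ, v ∈ Finset.Icc M (M + L) → mv ≤ |(v:ℝ)| ∧ |(v:ℝ)| ≤ V := by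
          intro v hv
          obtain ⟨h1, h2⟩ := Finset.mem_Icc.1 hv
          have h1' : (M:ℝ) ≤ v := by exact_mod_cast h1
          have h2' : (v:ℝ) ≤ (M:ℝ) + L := by exact_mod_cast h2
          have hva : (v:ℝ) ≤ |(v:ℝ)| := le_abs_self _
          have hvn : -|(v:ℝ)| ≤ (v:ℝ) := neg_abs_le _
          have hMa : |(M:ℝ)| ≤ V := le_max_left _ _
          have hMLa : |(M:ℝ) + L| ≤ V := le_max_right _ _
          have hMn : -|(M:ℝ)| ≤ (M:ℝ) := neg_abs_le _
          have hMLs : (M:ℝ) + L ≤ |(M:ℝ) + L| := le_abs_self _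
          constructor
          · refine max_le (abs_nonneg _) (max_le (by linarith only [h1', hva])
              (by linarith only [h2', hvn]))
          · rw [abs_le]; constructor <;> linarith only [hMa, hMLa, hMn, hMLs, h1', h2']
        -- pinning interval
        set x : ℝ := max (mv / (2 * Γ1)) 1 with hxdef
        have hx0 : (0:ℝ) < x := lt_of_lt_of_le one_pos (le_max_right _ _)
        have hx1 : (1:ℝ) ≤ x := le_max_right _ _
        set y : ℝ := max (2 * V / βm) x with hydef
        have hxy : x ≤ y := le_max_right _ _
        have hy0 : (0:ℝ) < y := lt_of_lt_of_le hx0 hxy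
        have hL0 : (0:ℝ) ≤ L := Nat.cast_nonneg _
        have hyx : y / x ≤ K0 * (1 + L) := by
          rw [div_le_iff₀ hx0]
          have hmvx : mv ≤ 2 * Γ1 * x := by
            have h1 : mv / (2 * Γ1) ≤ x := le_max_left _ _
            rw [div_le_iff₀ (by linarith only [hΓ10] : (0:ℝ) < 2 * Γ1)] at h1
            linarith only [h1]
          have h1L : (1:ℝ) ≤ 1 + L := by linarith only [hL0]
          have hK1L : (1:ℝ) ≤ K0 * (1 + L) := by
            calc (1:ℝ) = 1 * 1 := by ring
              _ ≤ K0 * (1 + L) := mul_le_mul hK01 h1L (by norm_num) (by linarith only [hK01])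
          have hK0βm : K0 * βm = 4 * Γ1 + 2 + βm := by
            rw [hK0def]; field_simp
          apply max_le
          · rw [div_le_iff₀ hβm0]
            have hLx : (L:ℝ) ≤ L * x := by nlinarith only [hL0, hx1]
            have e2 : K0 * (1 + L) * x * βm = (K0 * βm) * x + (K0 * βm) * (L * x) := by ring
            rw [e2, hK0βm]
            have e1 : 2 * V ≤ 4 * Γ1 * x + 2 * (L * x) := by
              linarith only [hVmv, hmvx, hLx]
            have e3 : 0 ≤ (2 + βm) * x := mul_nonneg (by linarith only [hβm0]) hx0.le
            have e5 : 0 ≤ (4 * Γ1 + βm) * (L * x) :=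
              mul_nonneg (by linarith only [hΓ10, hβm0]) (mul_nonneg hL0 hx0.le)
            nlinarith only [e1, e3, e5]
          · have h6 := mul_le_mul_of_nonneg_left hK1L hx0.le
            nlinarith only [h6]
        set Bnd : ℕ := Nat.floor y + 1 with hBnddef
        set Pin : Polynomial ℤ → Finset ℕ := fun q =>
          (Finset.range Bnd).filter (fun n => Nbig ≤ n ∧ x ≤ (r (n + q.natDegree) : ℝ) ∧
            (r (n + q.natDegree) : ℝ) ≤ y) with hPindef
        have hlogL0 : 0 ≤ Real.log L := Real.log_nonneg (by exact_mod_cast Nat.one_le_of_lt hL)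
        have hPincard : ∀ q : Polynomial ℤ, ((Pin q).card : ℝ) ≤ Cpin * B := by
          intro q
          have h1 := pin_card hmono.monotone hρ hlac q.natDegree Nbig Bnd (by omega) x y hx0 hxy
          have hyx' : Real.log (y / x) ≤ mK0 + 2 * Real.log L := by
            have hL2 : (2:ℝ) ≤ L := by exact_mod_cast hL
            have hLL : (1:ℝ) + L ≤ (L:ℝ) ^ 2 := by nlinarith only [hL2]
            have h2 : Real.log (y / x) ≤ Real.log (K0 * (1 + L)) :=
              Real.log_le_log (div_pos hy0 hx0) hyx
            have h3 : Real.log (K0 * (1 + L)) = Real.log K0 + Real.log (1 + L) :=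
              Real.log_mul (by linarith only [hK01] : (0:ℝ) < K0).ne'
                (by linarith only [hL0] : (0:ℝ) < 1 + L).ne'
            have h4 : Real.log (1 + L) ≤ 2 * Real.log L := by
              calc Real.log (1 + L) ≤ Real.log ((L:ℝ) ^ 2) := Real.log_le_log (by positivity) hLL
                _ = 2 * Real.log L := by rw [Real.log_pow]; push_cast; ring
            have h5 : Real.log K0 ≤ mK0 := le_max_right _ _
            linarith only [h2, h3, h4, h5]
          calc ((Pin q).card : ℝ) ≤ Real.log (y / x) / Real.log ρ + 1 := h1
            _ ≤ (mK0 + 2 * Real.log L) / Real.log ρ + 1 := by gcongr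
            _ ≤ Cpin * B := by
                rw [hCpindef, hBdef]
                have hkey : mK0 + 2 * Real.log L ≤ (mK0 + 2) * (Real.log L + 2) := by
                  nlinarith only [hmK00, hlogL0]
                have h6 : (mK0 + 2 * Real.log L) / Real.log ρ
                    ≤ (mK0 + 2) * (Real.log L + 2) / Real.log ρ := by gcongr
                have h7 : (1:ℝ) ≤ Real.log L + 2 := by linarith only [hlogL0]
                have h8 : (mK0 + 2) * (Real.log L + 2) / Real.log ρ
                    = (mK0 + 2) / Real.log ρ * (Real.log L + 2) := by ring
                calc (mK0 + 2 * Real.log L) / Real.log ρ + 1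
                    ≤ (mK0 + 2) / Real.log ρ * (Real.log L + 2) + 1 := by
                      rw [← h8]; linarith only [h6]
                  _ ≤ (mK0 + 2) / Real.log ρ * (Real.log L + 2) + (Real.log L + 2) := by
                      linarith only [h7]
                  _ = ((mK0 + 2) / Real.log ρ + 1) * (Real.log L + 2) := by ring
        -- upper / lower bounds for elements
        have hupZ : ∀ q ∈ l', ∀ (n b D' : ℕ), n ≤ b → q.natDegree ≤ D' →
            |Ev r q n| ≤ Γm * (r (b + D') : ℤ) := by
          intro q hq n b D' hnb hD'
          calc |Ev r q n| ≤ GG q * r (n + q.natDegree) := Ev_abs_le hmono.monotone q n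
            _ ≤ Γm * r (b + D') := by
                have h1 : GG q ≤ Γm := hGGle q (List.mem_toFinset.2 hq)
                have h2 : r (n + q.natDegree) ≤ r (b + D') := hmono.monotone (by omega)
                have h3 : (0:ℤ) ≤ GG q := GG_nonneg q
                have h4 : (0:ℤ) ≤ (r (n + q.natDegree) : ℤ) := by exact_mod_cast Nat.zero_le _
                exact mul_le_mul h1 (by exact_mod_cast h2) h4 hΓm0
        have hlowR : ∀ q ∈ l', ∀ n, Nbig ≤ n →
            βm * (r (n + q.natDegree) : ℝ) ≤ |(Ev r q n : ℝ)| := by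
          intro q hq n hn
          have hNfq : Nf q ≤ Nm := Finset.le_sup (List.mem_toFinset.2 hq)
          have h1 := hbf q hq n (by omega)
          have h2 : βm ≤ βf q := hβmle q (List.mem_toFinset.2 hq)
          have h3 : (0:ℝ) ≤ (r (n + q.natDegree) : ℝ) := Nat.cast_nonneg _
          have h4 := mul_le_mul_of_nonneg_right h2 h3
          linarith only [h1, h4]
        obtain ⟨W, hWcard, hWmem⟩ := SumsLe.values_finset r l' Nbig
        -- the three families
        set F0 : Finset ℤ := (Finset.Icc M (M + L)).filter (fun v => SumsLe r l' Nbig v)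
          with hF0def
        set FA : Finset ℤ := S.biUnion (fun q1 => (l'.erase q1).toFinset.biUnion (fun q2 =>
          (Finset.range (T + 1)).biUnion (fun t =>
            (Finset.Icc M (M + L)).filter (fun v => Sums r (ml q1 q2 t) v)))) with hFAdef
        set FB : Finset ℤ := S.biUnion (fun q1 => (Pin q1).biUnion (fun n =>
          (Finset.Icc M (M + L)).filter (fun v => Sums r (l'.erase q1) (v - Ev r q1 n))))
          with hFBdef
        -- the covering
        have hcover : (Finset.Icc M (M + L)).filter (fun v => Sums r l' v) ⊆ F0 ∪ FA ∪ FB := by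
          intro v hv
          obtain ⟨hvI, b, hb⟩ := Finset.mem_filter.1 hv
          obtain ⟨q1, hq1, n1, hn1b, w, hvw, hw⟩ := hb.attain hne
          by_cases hn1 : n1 < Nbig
          · apply Finset.mem_union_left
            apply Finset.mem_union_left
            refine Finset.mem_filter.2 ⟨hvI, ?_⟩
            have h1 : SumsLe r (l'.erase q1) Nbig w := hw.mono (by omega)
            have h2 : SumsLe r (q1 :: l'.erase q1) Nbig v := by
              rw [hvw]; exact SumsLe.cons q1 n1 (by omega) h1
            exact h2.perm (List.perm_cons_erase hq1).symm
          push_neg at hn1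
          have hq1S : q1 ∈ S := List.mem_toFinset.2 hq1
          set D1 := q1.natDegree with hD1def
          set R1 : ℝ := (r (n1 + D1) : ℝ) with hR1def
          have hR1pos : (0:ℝ) < R1 := by
            rw [hR1def]
            exact rpos hmono _ (by omega)
          have hwsmall : (∃ q2 ∈ l'.erase q1, ∃ t ≤ T, Sums r (ml q1 q2 t) v) ∨
              (|(w:ℝ)| ≤ βm / 2 * R1 ∧ |(w:ℝ)| ≤ Γ1 * R1) := by
            rcases eq_or_ne (l'.erase q1) [] with he2 | he2
            · right
              rw [he2] at hw
              cases hw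
              constructor
              · simp only [Int.cast_zero, abs_zero]
                exact mul_nonneg (by linarith only [hβm0]) hR1pos.le
              · simp only [Int.cast_zero, abs_zero]
                exact mul_nonneg hΓ10.le hR1pos.le
            · obtain ⟨q2, hq2, n2, hn2, u, hwu, hu⟩ := hw.attain he2
              by_cases ht : n1 - n2 ≤ T
              · left
                refine ⟨q2, hq2, n1 - n2, ht, n2, ?_⟩
                have hEv : Ev r (Polynomial.X ^ (n1 - n2) * q1 + q2) n2
                    = Ev r q1 n1 + Ev r q2 n2 := by
                  rw [Ev_add, Ev_X_pow_mul, show n2 + (n1 - n2) = n1 by omega]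
                have hveq : v = Ev r (Polynomial.X ^ (n1 - n2) * q1 + q2) n2 + u := by
                  rw [hEv, hvw, hwu]; ring
                rw [hveq]
                exact SumsLe.cons _ n2 le_rfl hu
              · right
                push_neg at ht
                have hAZ : ∀ q ∈ (l'.erase q1).erase q2, ∀ n, n ≤ n2 →
                    |Ev r q n| ≤ Γm * (r (n2 + Dm) : ℤ) := by
                  intro q hq n hn
                  have hql' : q ∈ l' := List.mem_of_mem_erase (List.mem_of_mem_erase hq)
                  exact hupZ q hql' n n2 Dm hn (Finset.le_sup (List.mem_toFinset.2 hql'))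
                have huabs : |u| ≤ ((l'.erase q1).erase q2).length * (Γm * (r (n2 + Dm) : ℤ)) :=
                  hu.abs_le _ (fun q hq n hn => hAZ q hq n hn)
                have hq2l' : q2 ∈ l' := List.mem_of_mem_erase hq2
                have hq2abs : |Ev r q2 n2| ≤ Γm * (r (n2 + Dm) : ℤ) :=
                  hupZ q2 hq2l' n2 n2 Dm le_rfl (Finset.le_sup (List.mem_toFinset.2 hq2l'))
                have hlen2 : ((l'.erase q1).erase q2).length ≤ len := by
                  rw [List.length_erase_of_mem hq2, herlen q1 hq1]
                  omega
                have hA0 : (0:ℤ) ≤ Γm * (r (n2 + Dm) : ℤ) :=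
                  mul_nonneg hΓm0 (by exact_mod_cast Nat.zero_le _)
                have hwZ : |w| ≤ (kk : ℤ) * (Γm * (r (n2 + Dm) : ℤ)) := by
                  rw [hwu]
                  calc |Ev r q2 n2 + u| ≤ |Ev r q2 n2| + |u| := abs_add_le _ _
                    _ ≤ Γm * (r (n2 + Dm) : ℤ)
                        + ((l'.erase q1).erase q2).length * (Γm * (r (n2 + Dm) : ℤ)) :=
                        add_le_add hq2abs huabs
                    _ ≤ (kk : ℤ) * (Γm * (r (n2 + Dm) : ℤ)) := by
                        have h9 : (((l'.erase q1).erase q2).length : ℤ) + 1 ≤ (kk : ℤ) := by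
                          exact_mod_cast Nat.succ_le_of_lt (by omega)
                        nlinarith only [h9, hA0]
                have hR2 : (0:ℝ) ≤ (r (n2 + Dm) : ℝ) := Nat.cast_nonneg _
                have hwR : |(w:ℝ)| ≤ kk * Γ1 * (r (n2 + Dm) : ℝ) := by
                  have h9 : (|w| : ℝ) ≤ (kk : ℝ) * ((Γm : ℝ) * (r (n2 + Dm) : ℝ)) := by
                    exact_mod_cast hwZ
                  have h10 : (Γm : ℝ) ≤ Γ1 := by rw [hΓ1def]; linarith
                  have h11 : (0:ℝ) ≤ (kk:ℝ) := Nat.cast_nonneg _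
                  have h12 := mul_le_mul_of_nonneg_left
                    (mul_le_mul_of_nonneg_right h10 hR2) h11
                  linarith only [h9, h12]
                have hlac2' : ρ ^ T2 * (r (n2 + Dm) : ℝ) ≤ R1 :=
                  lac2 hmono.monotone hρ.le hlac (n2 + Dm) (n1 + D1) T2 (by omega) (by omega)
                have hT2' : 2 * kk * Γ1 / βm ≤ ρ ^ T2 := le_trans (le_max_left _ _) hT2
                have hT2'' : (kk : ℝ) ≤ ρ ^ T2 := le_trans (le_max_right _ _) hT2
                have h2' : 2 * kk * Γ1 ≤ βm * ρ ^ T2 := by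
                  rw [div_le_iff₀ hβm0] at hT2'
                  linarith
                constructor
                · have m1 := mul_le_mul_of_nonneg_left hlac2' hβm0.le
                  have m2 := mul_le_mul_of_nonneg_right h2' hR2
                  linarith only [hwR, m1, m2]
                · have m3 := mul_le_mul_of_nonneg_left hlac2' hΓ10.le
                  have m4 := mul_le_mul_of_nonneg_right hT2'' (mul_nonneg hΓ10.le hR2)
                  linarith only [hwR, m3, m4]
          rcases hwsmall with ⟨q2, hq2, t, ht, hsums⟩ | ⟨hwhalf, hwup⟩
          · apply Finset.mem_union_left
            apply Finset.mem_union_right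
            exact Finset.mem_biUnion.2 ⟨q1, hq1S, Finset.mem_biUnion.2
              ⟨q2, List.mem_toFinset.2 hq2, Finset.mem_biUnion.2
                ⟨t, Finset.mem_range.2 (by omega), Finset.mem_filter.2 ⟨hvI, hsums⟩⟩⟩⟩
          · apply Finset.mem_union_right
            have hEvlow := hlowR q1 hq1 n1 hn1
            have hEvupZ : |Ev r q1 n1| ≤ Γm * (r (n1 + D1) : ℤ) :=
              hupZ q1 hq1 n1 n1 D1 le_rfl le_rfl
            have hEvupR : |(Ev r q1 n1 : ℝ)| ≤ Γ1 * R1 := by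
              have h9 : (|Ev r q1 n1| : ℝ) ≤ (Γm : ℝ) * (r (n1 + D1) : ℝ) := by
                exact_mod_cast hEvupZ
              have h10 : (Γm : ℝ) ≤ Γ1 := by rw [hΓ1def]; linarith only []
              have h11 := mul_le_mul_of_nonneg_right h10 hR1pos.le
              linarith only [h9, h11]
            obtain ⟨hvmv, hvV⟩ := hvbounds v hvI
            have hvEv : (v:ℝ) = (Ev r q1 n1 : ℝ) + (w:ℝ) := by
              rw [hvw]; push_cast; ring
            have habs1 : βm / 2 * R1 ≤ |(v:ℝ)| := by
              have h1 : |(Ev r q1 n1 : ℝ)| ≤ |(v:ℝ)| + |(w:ℝ)| := by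
                rw [show (Ev r q1 n1 : ℝ) = (v:ℝ) - w by linarith only [hvEv]]
                exact abs_sub _ _
              linarith only [h1, hEvlow, hwhalf]
            have habs2 : |(v:ℝ)| ≤ 2 * Γ1 * R1 := by
              have h1 : |(v:ℝ)| ≤ |(Ev r q1 n1 : ℝ)| + |(w:ℝ)| := by
                rw [hvEv]; exact abs_add_le _ _
              linarith only [h1, hEvupR, hwup]
            have hrx : x ≤ R1 := by
              refine max_le ?_ ?_
              · rw [div_le_iff₀ (by linarith only [hΓ10] : (0:ℝ) < 2 * Γ1)]
                linarith only [hvmv, habs2]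
              · have h1 : n1 + D1 ≤ r (n1 + D1) := hmono.le_apply
                have h2 : (1:ℕ) ≤ r (n1 + D1) := by omega
                rw [hR1def]
                exact_mod_cast h2
            have hry : R1 ≤ y := by
              refine le_trans ?_ (le_max_left _ _)
              rw [le_div_iff₀ hβm0]
              linarith only [habs1, hvV]
            have hnBnd : n1 < Bnd := by
              have h2 : ((n1 + D1 : ℕ) : ℝ) ≤ R1 := by
                rw [hR1def]; exact_mod_cast hmono.le_apply
              have h3 : (n1 : ℝ) ≤ y := by
                have h5 : (n1:ℝ) ≤ ((n1 + D1 : ℕ) : ℝ) := by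
                  push_cast; linarith only [Nat.cast_nonneg (α := ℝ) D1]
                linarith only [h5, h2, hry]
              have h4 : n1 ≤ Nat.floor y := Nat.le_floor h3
              omega
            refine Finset.mem_biUnion.2 ⟨q1, hq1S, Finset.mem_biUnion.2 ⟨n1, ?_, ?_⟩⟩
            · exact Finset.mem_filter.2 ⟨Finset.mem_range.2 hnBnd, hn1, hrx, hry⟩
            · refine Finset.mem_filter.2 ⟨hvI, n1, ?_⟩
              rw [show v - Ev r q1 n1 = w by omega]
              exact hw
                -- counting the three families
        have hF0card : (F0.card : ℝ) ≤ C0r := by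
          have hsub : F0 ⊆ W := fun v hv => hWmem v (Finset.mem_filter.1 hv).2
          have h1 : F0.card ≤ (Nbig + 1) ^ (len + 1) := by
            calc F0.card ≤ W.card := Finset.card_le_card hsub
              _ ≤ (Nbig + 1) ^ l'.length := hWcard
              _ = (Nbig + 1) ^ (len + 1) := by rw [hl'len]
          rw [hC0rdef]
          exact_mod_cast h1
        have hpow_le : ∀ m : ℕ, m ≤ len → (Real.log L + 2) ^ m ≤ B ^ len := by
          intro m hm
          exact pow_le_pow_right₀ hB1 hm
        have hFAcard : (FA.card : ℝ) ≤ CA * B ^ len := by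
          have h2 : FA.card ≤ ∑ q1 ∈ S, ∑ q2 ∈ (l'.erase q1).toFinset,
              ∑ t ∈ Finset.range (T + 1),
                ((Finset.Icc M (M + L)).filter (fun v => Sums r (ml q1 q2 t) v)).card := by
            refine le_trans Finset.card_biUnion_le (Finset.sum_le_sum fun q1 _ => ?_)
            refine le_trans Finset.card_biUnion_le (Finset.sum_le_sum fun q2 _ => ?_)
            exact Finset.card_biUnion_le
          have h1 : (FA.card : ℝ) ≤ ∑ q1 ∈ S, ∑ q2 ∈ (l'.erase q1).toFinset,
              ∑ t ∈ Finset.range (T + 1),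
                (((Finset.Icc M (M + L)).filter (fun v => Sums r (ml q1 q2 t) v)).card : ℝ) := by
            exact_mod_cast h2
          refine le_trans h1 ?_
          rw [hCAdef, Finset.sum_mul]
          refine Finset.sum_le_sum fun q1 hq1 => ?_
          rw [Finset.sum_mul]
          refine Finset.sum_le_sum fun q2 hq2 => ?_
          rw [Finset.sum_mul]
          refine Finset.sum_le_sum fun t _ => ?_
          have hq1l : q1 ∈ l' := List.mem_toFinset.1 hq1
          have hq2l : q2 ∈ l'.erase q1 := List.mem_toFinset.1 hq2
          calc (((Finset.Icc M (M + L)).filter (fun v => Sums r (ml q1 q2 t) v)).card : ℝ)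
              ≤ CF (ml q1 q2 t) * (Real.log L + 2) ^ (ml q1 q2 t).length :=
                hCF _ (hmllen q1 hq1l q2 hq2l t) M L hL
            _ ≤ CF (ml q1 q2 t) * B ^ len :=
                mul_le_mul_of_nonneg_left (hpow_le _ (hmllen q1 hq1l q2 hq2l t)) (hCF0 _).le
        have hFBcard : (FB.card : ℝ) ≤ CB * Cpin * B ^ (len + 1) := by
          have h2 : FB.card ≤ ∑ q1 ∈ S, ∑ n ∈ Pin q1,
              ((Finset.Icc M (M + L)).filter
                (fun v => Sums r (l'.erase q1) (v - Ev r q1 n))).card := by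
            refine le_trans Finset.card_biUnion_le (Finset.sum_le_sum fun q1 _ => ?_)
            exact Finset.card_biUnion_le
          have h1 : (FB.card : ℝ) ≤ ∑ q1 ∈ S, ∑ n ∈ Pin q1,
              (((Finset.Icc M (M + L)).filter
                (fun v => Sums r (l'.erase q1) (v - Ev r q1 n))).card : ℝ) := by
            exact_mod_cast h2
          refine le_trans h1 ?_
          have hpiece : ∀ q1 ∈ S, ∀ n : ℕ, (((Finset.Icc M (M + L)).filter
              (fun v => Sums r (l'.erase q1) (v - Ev r q1 n))).card : ℝ)
                ≤ CF (l'.erase q1) * B ^ len := by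
            intro q1 hq1 n
            have hq1l : q1 ∈ l' := List.mem_toFinset.1 hq1
            have h3 := card_shift M L (Ev r q1 n) (fun v => Sums r (l'.erase q1) v)
            have h4 := hCF (l'.erase q1) (le_of_eq (herlen q1 hq1l)) (M - Ev r q1 n) L hL
            calc (((Finset.Icc M (M + L)).filter
                (fun v => Sums r (l'.erase q1) (v - Ev r q1 n))).card : ℝ)
                ≤ (((Finset.Icc (M - Ev r q1 n) (M - Ev r q1 n + L)).filter
                    (fun v => Sums r (l'.erase q1) v)).card : ℝ) := by exact_mod_cast h3
              _ ≤ CF (l'.erase q1) * (Real.log L + 2) ^ (l'.erase q1).length := h4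
              _ ≤ CF (l'.erase q1) * B ^ len :=
                  mul_le_mul_of_nonneg_left (hpow_le _ (le_of_eq (herlen q1 hq1l))) (hCF0 _).le
          calc ∑ q1 ∈ S, ∑ n ∈ Pin q1, (((Finset.Icc M (M + L)).filter
              (fun v => Sums r (l'.erase q1) (v - Ev r q1 n))).card : ℝ)
              ≤ ∑ q1 ∈ S, ∑ _n ∈ Pin q1, CF (l'.erase q1) * B ^ len :=
                Finset.sum_le_sum fun q1 hq1 => Finset.sum_le_sum fun n _ => hpiece q1 hq1 n
            _ = ∑ q1 ∈ S, ((Pin q1).card : ℝ) * (CF (l'.erase q1) * B ^ len) := by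
                refine Finset.sum_congr rfl fun q1 _ => ?_
                rw [Finset.sum_const, nsmul_eq_mul]
            _ ≤ ∑ q1 ∈ S, (Cpin * B) * (CF (l'.erase q1) * B ^ len) := by
                refine Finset.sum_le_sum fun q1 _ => ?_
                exact mul_le_mul_of_nonneg_right (hPincard q1)
                  (mul_nonneg (hCF0 _).le (pow_nonneg hB0.le _))
            _ = CB * Cpin * B ^ (len + 1) := by
                rw [Finset.sum_congr rfl (fun q1 _ => by ring :
                  ∀ q1 ∈ S, (Cpin * B) * (CF (l'.erase q1) * B ^ len)
                    = CF (l'.erase q1) * (Cpin * B ^ (len + 1))), ← Finset.sum_mul, hCBdef]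
                ring
        -- putting everything together
        calc (((Finset.Icc M (M + L)).filter (fun v => Sums r l' v)).card : ℝ)
            ≤ (((F0 ∪ FA) ∪ FB).card : ℝ) := by
              exact_mod_cast Finset.card_le_card (by
                intro v hv
                exact hcover hv)
          _ ≤ (F0.card : ℝ) + FA.card + FB.card := by
              exact_mod_cast le_trans (Finset.card_union_le (F0 ∪ FA) FB)
                (Nat.add_le_add_right (Finset.card_union_le F0 FA) _)
          _ ≤ C0r + CA * B ^ len + CB * Cpin * B ^ (len + 1) := by
              linarith only [hF0card, hFAcard, hFBcard]
          _ ≤ (C0r + CA + CB * Cpin + 1) * (Real.log L + 2) ^ l.length := by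
              rw [hllen]
              have h1 : B ^ len ≤ B ^ (len + 1) := pow_le_pow_right₀ hB1 (by omega)
              have h2 : (1:ℝ) ≤ B ^ (len + 1) := by
                simpa using pow_le_pow_right₀ hB1 (Nat.zero_le (len + 1))
              have h3 : (0:ℝ) ≤ B ^ (len + 1) := le_trans zero_le_one h2
              have e1 : C0r * 1 ≤ C0r * B ^ (len + 1) := mul_le_mul_of_nonneg_left h2 hC0r.le
              have e2 : CA * B ^ len ≤ CA * B ^ (len + 1) := mul_le_mul_of_nonneg_left h1 hCA0
              have e3 : CB * Cpin * B ^ (len + 1) ≤ CB * Cpin * B ^ (len + 1) := le_rfl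
              nlinarith only [e1, e2, e3, h3, hCBCpin]



end Count
set_option maxHeartbeats 1000000 in
/-- for a regular sequence `r` and operators `f₁, …, f_k` on `r`,
the set of natural numbers of the form `f₁(n₁) + ⋯ + f_k(n_k)` is not
piecewise syndetic. -/
theorem image_of_operators_not_piecewiseSyndetic
    (r : ℕ → ℕ) (hr : IsRegularSequence r) (k : ℕ)
    (f : Fin k → ℕ → ℤ)
    (hf : ∀ j : Fin k, ∃ d : ℕ, ∃ a : ℕ → ℤ, a d ≠ 0 ∧
      ∀ n : ℕ, f j n = ∑ i ∈ Finset.range (d + 1), a i * (r (n + i) : ℤ)) :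
    ¬ PiecewiseSyndetic {x : ℕ | ∃ n : Fin k → ℕ, (∑ j, f j (n j)) = (x : ℤ)} := by
  classical
  intro hPS
  obtain ⟨d, hd⟩ := hPS
  have hmono := hr.1
  obtain ⟨ρ, Nr, red, hρ, hlac, hredEv, hdich⟩ := master r hr
  choose dd aa haa hfa using hf
  set P : Fin k → Polynomial ℤ := fun j =>
    ∑ i ∈ Finset.range (dd j + 1), Polynomial.C (aa j i) * Polynomial.X ^ i with hPdef
  have hPEv : ∀ j n, Ev r (P j) n = f j n := by
    intro j n
    rw [hPdef]
    simp only []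
    rw [Ev_finsetSum, hfa j n]
    refine Finset.sum_congr rfl fun i _ => ?_
    rw [Ev_C_mul, Polynomial.X_pow_eq_monomial, Ev_monomial, one_mul]
  set A : Set ℕ := {x : ℕ | ∃ n : Fin k → ℕ, (∑ j, f j (n j)) = (x : ℤ)} with hAdef
  have hmem : ∀ x : ℕ, x ∈ A → Sums r (List.ofFn P) (x : ℤ) := by
    intro x hx
    obtain ⟨nn, hnn⟩ := hx
    have h1 : (∑ j, Ev r (P j) (nn j)) = (x : ℤ) := by
      rw [← hnn]
      exact Finset.sum_congr rfl fun j _ => hPEv j (nn j)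
    rw [← h1]
    exact Sums_of_finSum r P nn
  obtain ⟨C, hC0, hC⟩ := count_lemma hmono hρ hlac hredEv hdich
    ((List.ofFn P).length) (List.ofFn P) le_rfl
  -- choose a long chain length K
  set d1 : ℕ := d + 1 with hd1def
  have hd1R : (1:ℝ) ≤ (d1:ℝ) := by exact_mod_cast Nat.one_le_iff_ne_zero.2 (by omega)
  have hd1pos : (0:ℝ) < (d1:ℝ) := lt_of_lt_of_le one_pos hd1R
  set kk : ℕ := (List.ofFn P).length with hkk
  have hC3d : (0:ℝ) < C * 3 ^ kk * d1 := by positivity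
  have htend := Real.tendsto_pow_log_div_mul_add_atTop 1 0 kk one_ne_zero
  have hev1 : ∀ᶠ z in Filter.atTop,
      Real.log z ^ kk / (1 * z + 0) < 1 / (C * 3 ^ kk * d1) :=
    Filter.Tendsto.eventually_lt_const (by positivity) htend
  obtain ⟨z0, hz0⟩ := Filter.eventually_atTop.1
    (hev1.and ((eventually_ge_atTop (Real.exp 1)).and (eventually_gt_atTop 0)))
  set K : ℕ := max 2 (Nat.ceil z0) with hKdef
  set L : ℕ := d1 * K with hLdef
  have hK2 : 2 ≤ K := le_max_left _ _
  have hL2 : 2 ≤ L := by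
    calc 2 = 1 * 2 := by omega
      _ ≤ d1 * K := Nat.mul_le_mul (by omega) hK2
  have hzK : z0 ≤ ((L:ℕ):ℝ) := by
    have h1 : z0 ≤ (Nat.ceil z0 : ℝ) := Nat.le_ceil z0
    have h2 : (Nat.ceil z0 : ℝ) ≤ (K:ℝ) := by exact_mod_cast le_max_right 2 (Nat.ceil z0)
    have h3 : (K:ℝ) ≤ (L:ℝ) := by
      have : K ≤ L := by
        calc K = 1 * K := by omega
          _ ≤ d1 * K := Nat.mul_le_mul (by omega) le_rfl
      exact_mod_cast this
    linarith
  obtain ⟨hlt, hexp, hzpos⟩ := hz0 ((L:ℕ):ℝ) hzK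
  have hlog1 : (1:ℝ) ≤ Real.log L := by
    rw [Real.le_log_iff_exp_le hzpos]
    simpa using hexp
  -- the key numeric bound : C * (log L + 2)^kk < K
  have hnum : C * (Real.log L + 2) ^ kk < (K:ℝ) := by
    have h1 : (Real.log L + 2) ^ kk ≤ (3 * Real.log L) ^ kk := by
      apply pow_le_pow_left₀ (by linarith) (by linarith)
    have h2 : (3 * Real.log L : ℝ) ^ kk = 3 ^ kk * Real.log L ^ kk := mul_pow _ _ _
    rw [one_mul, add_zero, div_lt_div_iff₀ hzpos hC3d] at hlt
    -- hlt : log L ^ kk * (C * 3^kk * d1) < L * 1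
    have hLz : ((L:ℕ):ℝ) = (d1:ℝ) * K := by rw [hLdef]; push_cast; ring
    have h3 : C * (Real.log L + 2) ^ kk * d1 < (d1:ℝ) * K := by
      calc C * (Real.log L + 2) ^ kk * d1 ≤ C * (3 ^ kk * Real.log L ^ kk) * d1 := by
            have := mul_le_mul_of_nonneg_left (h1.trans_eq h2) hC0.le
            nlinarith only [this, hd1pos]
        _ = Real.log L ^ kk * (C * 3 ^ kk * d1) := by ring
        _ < 1 * (L:ℝ) := hlt
        _ = (d1:ℝ) * K := by rw [← hLz]; ring
    have h4 := (mul_lt_mul_iff_of_pos_right hd1pos).1 (by linarith [h3] : C * (Real.log L + 2) ^ kk * d1 < K * d1)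
    exact h4
  -- the chain of K elements of A
  obtain ⟨a, ha1, ha2⟩ := hd K
  have hstrict : ∀ i m, 1 ≤ m → i + m < K → a i < a (i + m) := by
    intro i m
    induction m with
    | zero => omega
    | succ m ih =>
        intro _ hiK
        rcases Nat.eq_zero_or_pos m with rfl | hm
        · exact (ha2 i (by omega)).1
        · have h5 : a i < a (i + m) := ih (by omega) (by omega)
          have h6 : a (i + m) < a (i + m + 1) := (ha2 (i + m) (by omega)).1
          exact lt_trans h5 h6
  have hgap : ∀ i, i < K → a i ≤ a 0 + d * i := by
    intro i
    induction i with
    | zero => omega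
    | succ i ih =>
        intro hiK
        have h5 := ha2 i (by omega)
        have h6 : a i ≤ a 0 + d * i := ih (by omega)
        rw [Nat.mul_succ]
        omega
  -- inject the chain into the window
  have hcard : K ≤ ((Finset.Icc ((a 0 : ℤ)) ((a 0 : ℤ) + L)).filter
      (fun v => Sums r (List.ofFn P) v)).card := by
    rw [← Finset.card_range K]
    apply Finset.card_le_card_of_injOn (fun i => ((a i : ℕ) : ℤ))
    · intro i hi
      have hiK : i < K := Finset.mem_range.1 hi
      refine Finset.mem_filter.2 ⟨Finset.mem_Icc.2 ⟨?_, ?_⟩, hmem (a i) (ha1 i hiK)⟩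
      · have h0i : a 0 ≤ a i := by
          rcases Nat.eq_zero_or_pos i with rfl | hipos
          · exact le_rfl
          · have h9 := hstrict 0 i hipos (by omega)
            rw [Nat.zero_add] at h9
            exact h9.le
        beta_reduce; exact_mod_cast h0i
      · have h7 : a i ≤ a 0 + d * i := hgap i hiK
        have h8 : d * i ≤ d1 * K := Nat.mul_le_mul (by omega) (by omega)
        have : a i ≤ a 0 + L := by rw [hLdef]; omega
        beta_reduce; exact_mod_cast this
    · intro i hi j hj hij
      have hiK : i < K := Finset.mem_range.1 hi
      have hjK : j < K := Finset.mem_range.1 hj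
      have key : ∀ i' j', i' < j' → j' < K → a i' < a j' := by
        intro i' j' hlt hK'
        have h9 := hstrict i' (j' - i') (by omega) (by omega)
        rwa [show i' + (j' - i') = j' by omega] at h9
      have haij : a i = a j := by
        have h11 : ((a i : ℕ) : ℤ) = ((a j : ℕ) : ℤ) := hij
        exact_mod_cast h11
      by_contra hne
      rcases Nat.lt_or_ge i j with h | h
      · exact absurd haij (Nat.ne_of_lt (key i j h hjK))
      · have h10 : j < i := by omega
        exact absurd haij.symm (Nat.ne_of_lt (key j i h10 hiK))
  have hcount := hC ((a 0 : ℤ)) L hL2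
  have hKR : (K:ℝ) ≤ C * (Real.log L + 2) ^ kk := by
    calc (K:ℝ) ≤ (((Finset.Icc ((a 0 : ℤ)) ((a 0 : ℤ) + L)).filter
        (fun v => Sums r (List.ofFn P) v)).card : ℝ) := by exact_mod_cast hcard
      _ ≤ C * (Real.log L + 2) ^ kk := hcount
  linarith
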